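/- Let n be a positive integer and let e + b ⊂ M(n) be the affine subspace of matrices whose subdiagonal entries are all −1, whose entries below the subdiagonal are 0, and whose entries on and above the diagonal are arbitrary. Then the restriction to e + b of the map Φ_n : M(n) → ℂ^{d(n)} is a bijection from e + b onto ℂ^{d(n)}. -/

import Mathlib

open Matrix Polynomial

noncomputable section

attribute [local instance] Matrix.normedAddCommGroup Matrix.normedSpace

def d (k : ℕ) : ℕ := k * (k + 1) / 2

def cutoff {n : ℕ} (x : Matrix (Fin n) (Fin n) ℂ) {m : ℕ} (h : m ≤ n) :
    Matrix (Fin m) (Fin m) ℂ :=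
  Matrix.of fun i j => x (Fin.castLE h i) (Fin.castLE h j)

def Phi (n : ℕ) (x : Matrix (Fin n) (Fin n) ℂ) : (Σ m : Fin n, Fin (m.1 + 1)) → ℂ :=
  fun p => (-1 : ℂ) ^ (p.1.1 - p.2.1 + 1) * ((cutoff x p.1.2).charpoly.coeff p.2.1)

def StronglyRegular {n : ℕ} (x : Matrix (Fin n) (Fin n) ℂ) : Prop :=
  Function.Surjective (fderiv ℂ (Phi n) x)

def InEB {n : ℕ} (x : Matrix (Fin n) (Fin n) ℂ) : Prop :=
  (∀ i j : Fin n, i.1 = j.1 + 1 → x i j = -1) ∧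
  (∀ i j : Fin n, j.1 + 1 < i.1 → x i j = 0)

def EigDisjoint {n : ℕ} (x : Matrix (Fin n) (Fin n) ℂ) : Prop :=
  (∀ (m : ℕ) (_ : 1 ≤ m) (hm : m ≤ n), (cutoff x hm).charpoly.roots.toFinset.card = m) ∧
  (∀ (m : ℕ) (_ : 1 ≤ m) (hm : m + 1 ≤ n) (z : ℂ),
    ¬((cutoff x (Nat.le_of_succ_le hm)).charpoly.IsRoot z ∧
      (cutoff x hm).charpoly.IsRoot z))

def embed {n m : ℕ} (h : m ≤ n) (y : Matrix (Fin m) (Fin m) ℂ) :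
    Matrix (Fin n) (Fin n) ℂ :=
  Matrix.of fun i j =>
    if hi : i.1 < m then if hj : j.1 < m then y ⟨i.1, hi⟩ ⟨j.1, hj⟩ else 0 else 0

def GSet {n : ℕ} (x : Matrix (Fin n) (Fin n) ℂ) {m : ℕ} (h : m ≤ n) :
    Set (Matrix (Fin n) (Fin n) ℂ) :=
  {g | IsUnit g ∧
    (∀ i j : Fin n, m ≤ i.1 ∨ m ≤ j.1 → g i j = (1 : Matrix (Fin n) (Fin n) ℂ) i j) ∧
    cutoff g h ∈ Submodule.span ℂ (Set.range fun k : ℕ => (cutoff x h) ^ k)}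

def centSubmodule {n : ℕ} (x : Matrix (Fin n) (Fin n) ℂ) :
    Submodule ℂ (Matrix (Fin n) (Fin n) ℂ) where
  carrier := {y | x * y = y * x}
  add_mem' := fun {a b} ha hb => by
    simp only [Set.mem_setOf_eq] at *
    rw [mul_add, add_mul, ha, hb]
  zero_mem' := by simp
  smul_mem' := fun c a ha => by
    simp only [Set.mem_setOf_eq] at *
    rw [mul_smul_comm, smul_mul_assoc, ha]

def Zsub {n : ℕ} (x : Matrix (Fin n) (Fin n) ℂ) {m : ℕ} (h : m ≤ n) :
    Submodule ℂ (Matrix (Fin n) (Fin n) ℂ) :=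
  Submodule.span ℂ (Set.range fun k : ℕ => embed h ((cutoff x h) ^ k))

def IsJacobi {n : ℕ} (x : Matrix (Fin n) (Fin n) ℂ) : Prop :=
  (∀ i j : Fin n, (i.1 + 1 < j.1 ∨ j.1 + 1 < i.1) → x i j = 0) ∧
  (∀ i j : Fin n, (i.1 + 1 = j.1 ∨ j.1 + 1 = i.1) → x i j ≠ 0)

lemma InEB_cutoff {n : ℕ} {x : Matrix (Fin n) (Fin n) ℂ} (hx : InEB x) {m : ℕ} (h : m ≤ n) :
    InEB (cutoff x h) :=
  ⟨fun i j hij => hx.1 _ _ hij, fun i j hij => hx.2 _ _ hij⟩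

lemma minor_det {m : ℕ} (y : Matrix (Fin (m+1)) (Fin (m+1)) ℂ) (hy : InEB y) (i : Fin (m+1)) :
    det ((charmatrix y).submatrix i.succAbove Fin.castSucc)
      = (cutoff y (le_of_lt i.2 : (i : ℕ) ≤ m + 1)).charpoly := by
  set N := (charmatrix y).submatrix i.succAbove Fin.castSucc with hN
  have hval_lt : ∀ r : Fin m, r.1 < i.1 → (i.succAbove r : ℕ) = r.1 := by
    intro r hr
    rw [Fin.succAbove_of_castSucc_lt _ _ (by simpa [Fin.lt_def] using hr)]
    simp
  have hval_ge : ∀ r : Fin m, i.1 ≤ r.1 → (i.succAbove r : ℕ) = r.1 + 1 := by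
    intro r hr
    rw [Fin.succAbove_of_le_castSucc _ _ (by simpa [Fin.le_def] using hr)]
    simp
  set b : Fin m → Fin 2 := fun r => if r.1 < i.1 then 0 else 1 with hb
  have hble : ∀ r : Fin m, b r = 1 → i.1 ≤ r.1 := by
    intro r hbr
    by_contra hcon
    simp [hb, lt_of_not_ge hcon] at hbr
  have hBT : N.BlockTriangular b := by
    intro r c hrc
    have hrc' : (if (c:ℕ) < (i:ℕ) then 0 else 1 : ℕ) < (if (r:ℕ) < (i:ℕ) then 0 else 1) := by
      simpa [hb, Fin.lt_def, apply_ite Fin.val] using hrc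
    have hcr : (c:ℕ) < i.1 ∧ ¬ (r:ℕ) < i.1 := by split_ifs at hrc' <;> omega
    obtain ⟨hc, hr⟩ := hcr
    have hr' : i.1 ≤ r.1 := le_of_not_gt hr
    have hz : y (i.succAbove r) (Fin.castSucc c) = 0 :=
      hy.2 _ _ (by rw [hval_ge _ hr', Fin.coe_castSucc]; omega)
    have hne : i.succAbove r ≠ Fin.castSucc c :=
      Fin.ne_of_val_ne (by rw [hval_ge _ hr', Fin.coe_castSucc]; omega)
    simp only [hN, submatrix_apply]
    rw [charmatrix_apply_ne _ _ _ hne, hz, map_zero, neg_zero]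
  rw [hBT.det_fintype, Fin.prod_univ_two]
  have h1 : (N.toSquareBlock b 1).det = 1 := by
    have hut : (N.toSquareBlock b 1).BlockTriangular id := by
      intro r c hrc
      have hcr : ((c : Fin m) : ℕ) < ((r : Fin m) : ℕ) := hrc
      have hr1 : i.1 ≤ ((r : Fin m) : ℕ) := hble _ r.2
      have hz : y (i.succAbove ↑r) (Fin.castSucc ↑c) = 0 :=
        hy.2 _ _ (by rw [hval_ge _ hr1, Fin.coe_castSucc]; omega)
      have hne : i.succAbove (↑r : Fin m) ≠ Fin.castSucc ↑c :=
        Fin.ne_of_val_ne (by rw [hval_ge _ hr1, Fin.coe_castSucc]; omega)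
      simp only [toSquareBlock_def, hN, submatrix_apply, Matrix.of_apply]
      rw [charmatrix_apply_ne _ _ _ hne, hz, map_zero, neg_zero]
    rw [det_of_upperTriangular hut]
    apply Finset.prod_eq_one
    intro r _
    have hr1 : i.1 ≤ ((r : Fin m) : ℕ) := hble _ r.2
    have hsub : y (i.succAbove ↑r) (Fin.castSucc ↑r) = -1 :=
      hy.1 _ _ (by rw [hval_ge _ hr1, Fin.coe_castSucc])
    have hne : i.succAbove (↑r : Fin m) ≠ Fin.castSucc ↑r :=
      Fin.ne_of_val_ne (by rw [hval_ge _ hr1, Fin.coe_castSucc]; omega)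
    simp only [toSquareBlock_def, hN, submatrix_apply, Matrix.of_apply]
    rw [charmatrix_apply_ne _ _ _ hne, hsub]
    simp
  have hile : i.1 ≤ m := by omega
  have h0 : (N.toSquareBlock b 0).det = (cutoff y (le_of_lt i.2 : (i : ℕ) ≤ m + 1)).charpoly := by
    let e : Fin i.1 ≃ {r : Fin m // b r = 0} :=
      { toFun := fun k => ⟨⟨k.1, lt_of_lt_of_le k.2 hile⟩, by simp [hb, k.2]⟩
        invFun := fun r => ⟨(r : Fin m).1, by
          have := r.2
          by_contra hcon
          simp [hb, le_of_not_gt hcon] at this⟩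
        left_inv := fun k => rfl
        right_inv := fun r => by ext; rfl }
    rw [← Matrix.det_submatrix_equiv_self e]
    congr 1
    have hentry : ∀ (a b : Fin (m+1)) (k l : Fin i.1), a.1 = (k:ℕ) → b.1 = (l:ℕ) →
        y a b = cutoff y (le_of_lt i.2 : (i : ℕ) ≤ m + 1) k l := by
      intro a b k l ha hb
      show y a b = y (Fin.castLE _ k) (Fin.castLE _ l)
      congr 1 <;> apply Fin.ext <;> simp [ha, hb]
    refine Matrix.ext fun k l => ?_
    have hk : (k : ℕ) < i.1 := k.2
    have hl : (l : ℕ) < i.1 := l.2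
    show charmatrix y (i.succAbove ⟨k.1, lt_of_lt_of_le hk hile⟩)
        (Fin.castSucc ⟨l.1, lt_of_lt_of_le hl hile⟩)
        = (cutoff y (le_of_lt i.2 : (i : ℕ) ≤ m + 1)).charmatrix k l
    have hkv : (i.succAbove ⟨k.1, lt_of_lt_of_le hk hile⟩ : ℕ) = k.1 := hval_lt _ hk
    by_cases hkl : (k : ℕ) = (l : ℕ)
    · have hk1 : i.succAbove ⟨k.1, lt_of_lt_of_le hk hile⟩
          = Fin.castSucc ⟨l.1, lt_of_lt_of_le hl hile⟩ := by
        apply Fin.ext; rw [hkv]; simpa using hkl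
      have hkeq : k = l := Fin.ext hkl
      rw [hk1, charmatrix_apply_eq, hkeq, charmatrix_apply_eq,
        hentry _ _ l l (by simp) (by simp)]
    · rw [charmatrix_apply_ne _ _ _ (by apply Fin.ne_of_val_ne; rw [hkv]; simpa using hkl),
        charmatrix_apply_ne _ _ _ (fun hc => hkl (by rw [hc])),
        hentry _ _ k l hkv (by simp)]
  rw [h0, h1, mul_one]

lemma charpoly_rec {m : ℕ} (y : Matrix (Fin (m+1)) (Fin (m+1)) ℂ) (hy : InEB y) :
    y.charpoly = X * (cutoff y (Nat.le_succ m)).charpoly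
      + ∑ i : Fin (m+1), ((-1:ℂ)^(i.1+m+1) * y i (Fin.last m)) •
          (cutoff y (le_of_lt i.2 : (i:ℕ) ≤ m+1)).charpoly := by
  have hdet : y.charpoly = ∑ i : Fin (m+1), (-1)^(i.1+m) * charmatrix y i (Fin.last m) *
      (cutoff y (le_of_lt i.2 : (i:ℕ) ≤ m+1)).charpoly := by
    rw [Matrix.charpoly, det_succ_column (charmatrix y) (Fin.last m)]
    refine Finset.sum_congr rfl fun i _ => ?_
    rw [Fin.succAbove_last, minor_det y hy i]
    simp [Fin.val_last]
  rw [hdet, Fin.sum_univ_castSucc]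
  conv_rhs => rw [Fin.sum_univ_castSucc]
  have hlast : (-1:ℂ[X])^((Fin.last m).1+m) * charmatrix y (Fin.last m) (Fin.last m) *
      (cutoff y (le_of_lt (Fin.last m).2 : ((Fin.last m):ℕ) ≤ m+1)).charpoly
      = X * (cutoff y (Nat.le_succ m)).charpoly
        + ((-1:ℂ)^((Fin.last m).1+m+1) * y (Fin.last m) (Fin.last m)) •
          (cutoff y (le_of_lt (Fin.last m).2 : ((Fin.last m):ℕ) ≤ m+1)).charpoly := by
    rw [charmatrix_apply_eq, smul_eq_C_mul]
    have h1 : ((-1:ℂ[X]))^((Fin.last m).1+m) = 1 := Even.neg_one_pow (by simp [Fin.val_last])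
    have h2 : ((-1:ℂ))^((Fin.last m).1+m+1) = -1 := Odd.neg_one_pow (by simp [Fin.val_last])
    rw [h1, h2]
    have : (cutoff y (le_of_lt (Fin.last m).2 : ((Fin.last m):ℕ) ≤ m+1)).charpoly
        = (cutoff y (Nat.le_succ m)).charpoly := rfl
    rw [this]
    simp only [map_neg, _root_.map_mul, C_neg, C_1, Polynomial.C_1]
    ring
  rw [hlast]
  have hsum : ∀ j : Fin m,
      (-1:ℂ[X])^((Fin.castSucc j).1+m) * charmatrix y (Fin.castSucc j) (Fin.last m) *
        (cutoff y (le_of_lt (Fin.castSucc j).2 : ((Fin.castSucc j):ℕ) ≤ m+1)).charpoly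
      = ((-1:ℂ)^((Fin.castSucc j).1+m+1) * y (Fin.castSucc j) (Fin.last m)) •
        (cutoff y (le_of_lt (Fin.castSucc j).2 : ((Fin.castSucc j):ℕ) ≤ m+1)).charpoly := by
    intro j
    rw [charmatrix_apply_ne _ _ _ (Fin.castSucc_lt_last j).ne, smul_eq_C_mul]
    simp only [map_neg, _root_.map_mul, map_pow, _root_.map_one, pow_succ]
    ring
  rw [Finset.sum_congr rfl (fun j _ => hsum j)]
  ring

lemma poly_basis (m : ℕ) : ∀ (p : ℕ → ℂ[X]), (∀ i, i ≤ m → (p i).Monic ∧ (p i).natDegree = i) →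
    ∀ q : ℂ[X], q.natDegree ≤ m → ∃! a : Fin (m+1) → ℂ, ∑ i : Fin (m+1), a i • p i.1 = q := by
  induction m with
  | zero =>
    intro p hp q hq
    have h0 : p 0 = 1 := ((hp 0 le_rfl).1.natDegree_eq_zero).mp (hp 0 le_rfl).2
    refine ⟨fun _ => q.coeff 0, ?_, ?_⟩
    · have : q.coeff 0 • p 0 = q := by
        rw [h0, smul_eq_C_mul, mul_one, ← Polynomial.eq_C_of_natDegree_le_zero hq]
      simpa [Fin.sum_univ_succ] using this
    · intro b hb
      simp only [Fin.sum_univ_succ, Finset.univ_eq_empty, Finset.sum_empty, add_zero,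
        Fin.val_zero] at hb
      rw [h0, smul_eq_C_mul, mul_one] at hb
      funext i
      have : i = 0 := Fin.ext (by omega)
      rw [this, ← Polynomial.coeff_C_zero (a := b 0), hb]
  | succ t ih =>
    intro p hp q hq
    have hpt := hp (t+1) le_rfl
    set c := q.coeff (t+1) with hc
    set q' := q - c • p (t+1) with hq'
    have hdq' : q'.natDegree ≤ t := by
      rw [Polynomial.natDegree_le_iff_coeff_eq_zero]
      intro k hk
      simp only [hq', Polynomial.coeff_sub, Polynomial.coeff_smul, smul_eq_mul]
      rcases eq_or_lt_of_le (Nat.succ_le_of_lt hk) with h | h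
      · have hco : (p (t+1)).coeff (t+1) = 1 := by
          have := hpt.1.coeff_natDegree
          rwa [hpt.2] at this
        subst h
        rw [hco, mul_one, hc, sub_self]
      · rw [Polynomial.coeff_eq_zero_of_natDegree_lt (lt_of_le_of_lt hq h),
          Polynomial.coeff_eq_zero_of_natDegree_lt (by rw [hpt.2]; exact h), mul_zero, sub_zero]
    obtain ⟨a', ha', hu'⟩ := ih p (fun i hi => hp i (hi.trans (Nat.le_succ t))) q' hdq'
    have hcoeff_zero : ∀ i : Fin (t+1), (p (Fin.castSucc i).1).coeff (t+1) = 0 := by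
      intro i
      apply Polynomial.coeff_eq_zero_of_natDegree_lt
      rw [(hp _ (by omega)).2]
      exact i.2
    refine ⟨Fin.snoc a' c, ?_, ?_⟩
    · have key : (∑ i : Fin (t+1), a' i • p i.1) + c • p (t+1) = q := by
        rw [ha', hq']; ring
      have goal2 : ∑ i : Fin (t+1+1), (Fin.snoc a' c : Fin (t+1+1) → ℂ) i • p i.1 = q := by
        rw [Fin.sum_univ_castSucc]
        simp only [Fin.snoc_castSucc, Fin.snoc_last, Fin.coe_castSucc, Fin.val_last]
        exact key
      exact goal2
    · intro b hb
      have hblast : b (Fin.last (t+1)) = c := by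
        have h1 : q.coeff (t+1) = ∑ i : Fin (t+2), b i * (p i.1).coeff (t+1) := by
          rw [← hb, Polynomial.finset_sum_coeff]
          exact Finset.sum_congr rfl fun i _ => by rw [Polynomial.coeff_smul, smul_eq_mul]
        rw [Fin.sum_univ_castSucc] at h1
        have h2 : ∀ i : Fin (t+1), b (Fin.castSucc i) * (p (Fin.castSucc i).1).coeff (t+1) = 0 := by
          intro i; rw [hcoeff_zero i, mul_zero]
        rw [Finset.sum_congr rfl (fun i _ => h2 i), Finset.sum_const_zero, zero_add,
          Fin.val_last] at h1
        have hco : (p (t+1)).coeff (t+1) = 1 := by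
          have := hpt.1.coeff_natDegree
          rwa [hpt.2] at this
        rw [hco, mul_one] at h1
        rw [← h1]
      have hb' : ∑ i : Fin (t+1), b (Fin.castSucc i) • p i.1 = q' := by
        rw [Fin.sum_univ_castSucc] at hb
        simp only [Fin.coe_castSucc, Fin.val_last] at hb
        rw [hblast] at hb
        rw [hq', ← hb]
        ring
      have huniq := hu' (fun i => b (Fin.castSucc i)) hb'
      funext i
      induction i using Fin.lastCases with
      | last => rw [hblast, Fin.snoc_last]
      | cast j =>
        rw [Fin.snoc_castSucc]
        exact congrFun huniq j

lemma charpoly_fin_zero (M : Matrix (Fin 0) (Fin 0) ℂ) : M.charpoly = 1 := by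
  rw [Matrix.charpoly]; exact det_fin_zero

lemma charpoly_natDeg {k : ℕ} (M : Matrix (Fin k) (Fin k) ℂ) : M.charpoly.natDegree = k := by
  rw [Matrix.charpoly_natDegree_eq_dim, Fintype.card_fin]

lemma monic_eq_of_coeff {k : ℕ} {P Q : ℂ[X]} (hP : P.Monic) (hQ : Q.Monic)
    (hdP : P.natDegree = k) (hdQ : Q.natDegree = k) (h : ∀ j, j < k → P.coeff j = Q.coeff j) :
    P = Q := by
  ext j
  rcases lt_trichotomy j k with h1 | h1 | h1
  · exact h j h1
  · subst h1
    rw [← hdP, hP.coeff_natDegree, hdP, ← hdQ, hQ.coeff_natDegree]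
  · rw [Polynomial.coeff_eq_zero_of_natDegree_lt (by omega : P.natDegree < j),
      Polynomial.coeff_eq_zero_of_natDegree_lt (by omega : Q.natDegree < j)]

lemma natDegree_sub_le_of {k : ℕ} {P Q : ℂ[X]} (hP : P.natDegree ≤ k + 1)
    (hQ : Q.natDegree ≤ k + 1) (h : P.coeff (k+1) = Q.coeff (k+1)) :
    (P - Q).natDegree ≤ k := by
  rw [Polynomial.natDegree_le_iff_coeff_eq_zero]
  intro j hj
  rw [Polynomial.coeff_sub]
  rcases eq_or_lt_of_le (Nat.succ_le_of_lt hj) with h1 | h1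
  · have hj1 : j = k+1 := by omega
    subst hj1
    rw [h, sub_self]
  · rw [Polynomial.coeff_eq_zero_of_natDegree_lt (by omega),
      Polynomial.coeff_eq_zero_of_natDegree_lt (by omega), sub_self]

lemma neg_one_pow_mul_self {e : ℕ} {t : ℂ} : (-1:ℂ)^e * ((-1:ℂ)^e * t) = t := by
  rw [← mul_assoc, ← pow_add]
  rw [Even.neg_one_pow ⟨e, rfl⟩, one_mul]

lemma phi_inj {n : ℕ} {x y : Matrix (Fin n) (Fin n) ℂ} (hx : InEB x) (hy : InEB y)
    (hxy : Phi n x = Phi n y) : x = y := by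
  have hsgn : ∀ e : ℕ, ((-1:ℂ)^e) ≠ 0 := fun e => pow_ne_zero _ (neg_ne_zero.mpr one_ne_zero)
  have hco : ∀ (m k : ℕ) (hm : m+1 ≤ n) (hk : k < m+1),
      ((cutoff x hm).charpoly).coeff k = ((cutoff y hm).charpoly).coeff k := by
    intro m k hm hk
    have h := congrFun hxy ⟨⟨m, by omega⟩, ⟨k, hk⟩⟩
    simp only [Phi] at h
    exact mul_left_cancel₀ (hsgn _) h
  have hPeq : ∀ (s : ℕ) (hs : s ≤ n), (cutoff x hs).charpoly = (cutoff y hs).charpoly := by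
    intro s hs
    cases s with
    | zero => rw [charpoly_fin_zero, charpoly_fin_zero]
    | succ t =>
      exact monic_eq_of_coeff (Matrix.charpoly_monic _) (Matrix.charpoly_monic _)
        (charpoly_natDeg _) (charpoly_natDeg _) (fun j hj => hco t j hs hj)
  have hcolumns : ∀ (m : ℕ) (hm : m+1 ≤ n) (i : Fin (m+1)),
      x (Fin.castLE hm i) (Fin.castLE hm (Fin.last m)) =
      y (Fin.castLE hm i) (Fin.castLE hm (Fin.last m)) := by
    intro m hm
    set px : ℕ → ℂ[X] := fun s => if hs : s ≤ n then (cutoff x hs).charpoly else 1 with hpxd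
    have hpx : ∀ (s : ℕ) (hs : s ≤ n), px s = (cutoff x hs).charpoly := fun s hs => dif_pos hs
    have hpy : ∀ (s : ℕ) (hs : s ≤ n), px s = (cutoff y hs).charpoly :=
      fun s hs => (dif_pos hs).trans (hPeq s hs)
    have hp : ∀ i, i ≤ m → (px i).Monic ∧ (px i).natDegree = i := by
      intro i hi
      rw [hpx i (by omega)]
      exact ⟨Matrix.charpoly_monic _, charpoly_natDeg _⟩
    set q : ℂ[X] := (cutoff x hm).charpoly - X * px m with hqd
    have hqdeg : q.natDegree ≤ m := by
      apply natDegree_sub_le_of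
      · rw [charpoly_natDeg]
      · calc (X * px m).natDegree ≤ X.natDegree + (px m).natDegree := Polynomial.natDegree_mul_le
          _ ≤ m + 1 := by rw [Polynomial.natDegree_X, hpx m (by omega), charpoly_natDeg]; omega
      · have hl : (cutoff x hm).charpoly.coeff (m+1) = 1 := by
          have h := (Matrix.charpoly_monic (cutoff x hm)).coeff_natDegree
          rwa [charpoly_natDeg] at h
        have hrr : (X * px m).coeff (m+1) = 1 := by
          rw [Polynomial.coeff_X_mul, hpx m (by omega)]
          have h := (Matrix.charpoly_monic (cutoff x (le_trans (Nat.le_succ m) hm))).coeff_natDegree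
          rwa [charpoly_natDeg] at h
        rw [hl, hrr]
    have hxr : ∑ i : Fin (m+1),
        ((-1:ℂ)^(i.1+m+1) * x (Fin.castLE hm i) (Fin.castLE hm (Fin.last m))) • px i.1 = q := by
      have hr := charpoly_rec (cutoff x hm) (InEB_cutoff hx hm)
      rw [hqd]
      rw [hr]
      have hXpart : X * (cutoff (cutoff x hm) (Nat.le_succ m)).charpoly = X * px m := by
        rw [hpx m (le_trans (Nat.le_succ m) hm)]
        rfl
      rw [hXpart]
      rw [add_sub_cancel_left]
      refine Finset.sum_congr rfl fun i _ => ?_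
      congr 1
      rw [hpx i.1 (le_trans (le_of_lt i.2) hm)]
      rfl
    have hyr : ∑ i : Fin (m+1),
        ((-1:ℂ)^(i.1+m+1) * y (Fin.castLE hm i) (Fin.castLE hm (Fin.last m))) • px i.1 = q := by
      have hr := charpoly_rec (cutoff y hm) (InEB_cutoff hy hm)
      rw [hqd, hPeq (m+1) hm]
      rw [hr]
      have hXpart : X * (cutoff (cutoff y hm) (Nat.le_succ m)).charpoly = X * px m := by
        rw [hpy m (le_trans (Nat.le_succ m) hm)]
        rfl
      rw [hXpart]
      rw [add_sub_cancel_left]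
      refine Finset.sum_congr rfl fun i _ => ?_
      congr 1
      rw [hpy i.1 (le_trans (le_of_lt i.2) hm)]
      rfl
    obtain ⟨a, -, hu⟩ := poly_basis m px hp q hqdeg
    have h1 := (hu _ hxr).trans (hu _ hyr).symm
    intro i
    have h2 := congrFun h1 i
    exact mul_left_cancel₀ (hsgn _) h2
  ext i j
  rcases lt_trichotomy i.1 (j.1+1) with h1 | h1 | h1
  · have hij : i.1 ≤ j.1 := by omega
    have := hcolumns j.1 j.2 ⟨i.1, by omega⟩
    have hieq : Fin.castLE j.2 (⟨i.1, by omega⟩ : Fin (j.1+1)) = i := Fin.ext rfl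
    have hjeq : Fin.castLE j.2 (Fin.last j.1) = j := Fin.ext rfl
    rwa [hieq, hjeq] at this
  · rw [hx.1 i j h1, hy.1 i j h1]
  · rw [hx.2 i j (by omega), hy.2 i j (by omega)]

lemma phi_surj {n : ℕ} (c : (Σ m : Fin n, Fin (m.1 + 1)) → ℂ) :
    ∃ x : Matrix (Fin n) (Fin n) ℂ, InEB x ∧ Phi n x = c := by
  classical
  set c' : ℕ → ℕ → ℂ :=
    fun m k => if h : m < n ∧ k < m+1 then c ⟨⟨m, h.1⟩, ⟨k, h.2⟩⟩ else 0 with hc'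
  set q : ℕ → ℂ[X] :=
    fun s => X^s + ∑ k : Fin s, Polynomial.C ((-1:ℂ)^(s-1-k.1+1) * c' (s-1) k.1) * X^k.1 with hq
  have hqdegsum : ∀ s : ℕ,
      (∑ k : Fin s, Polynomial.C ((-1:ℂ)^(s-1-k.1+1) * c' (s-1) k.1) * X^k.1).degree
        < ((s:ℕ) : WithBot ℕ) :=
    fun s => Polynomial.degree_sum_fin_lt _
  have hqmonic : ∀ s : ℕ, (q s).Monic := by
    intro s
    rw [hq]
    exact Polynomial.monic_X_pow_add (hqdegsum s)
  have hqdeg : ∀ s : ℕ, (q s).natDegree = s := by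
    intro s
    apply Polynomial.natDegree_eq_of_degree_eq_some
    rw [hq]
    simp only []
    rw [Polynomial.degree_add_eq_left_of_degree_lt
      (by rw [Polynomial.degree_X_pow]; exact hqdegsum s), Polynomial.degree_X_pow]
  have hqcoeff : ∀ (s j : ℕ), j < s → (q s).coeff j = (-1:ℂ)^(s-1-j+1) * c' (s-1) j := by
    intro s j hjs
    rw [hq]
    simp only []
    rw [Polynomial.coeff_add, Polynomial.coeff_X_pow, if_neg (by omega), zero_add,
      Polynomial.finset_sum_coeff]
    rw [Finset.sum_eq_single (⟨j, hjs⟩ : Fin s)]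
    · rw [Polynomial.coeff_C_mul, Polynomial.coeff_X_pow, if_pos rfl, mul_one]
    · intro b _ hb
      rw [Polynomial.coeff_C_mul, Polynomial.coeff_X_pow,
        if_neg (fun h => hb (Fin.ext (show b.1 = j by omega))), mul_zero]
    · intro h
      exact absurd (Finset.mem_univ _) h
  -- existence of columns
  have hcol : ∀ (m : ℕ) (hm : m < n), ∃ a : Fin (m+1) → ℂ,
      ∑ i : Fin (m+1), ((-1:ℂ)^(i.1+m+1) * a i) • q i.1 = q (m+1) - X * q m := by
    intro m hm
    have hrdeg : (q (m+1) - X * q m).natDegree ≤ m := by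
      apply natDegree_sub_le_of
      · rw [hqdeg]
      · calc (X * q m).natDegree ≤ X.natDegree + (q m).natDegree :=
            Polynomial.natDegree_mul_le
          _ ≤ m + 1 := by rw [Polynomial.natDegree_X, hqdeg]; omega
      · rw [Polynomial.coeff_X_mul]
        have h1 := (hqmonic (m+1)).coeff_natDegree
        rw [hqdeg] at h1
        have h2 := (hqmonic m).coeff_natDegree
        rw [hqdeg] at h2
        rw [h1, h2]
    obtain ⟨b, hb, -⟩ := poly_basis m q (fun i _ => ⟨hqmonic i, hqdeg i⟩) _ hrdeg
    refine ⟨fun i => (-1:ℂ)^(i.1+m+1) * b i, ?_⟩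
    rw [← hb]
    exact Finset.sum_congr rfl fun i _ => by rw [neg_one_pow_mul_self]
  choose a ha using hcol
  set x : Matrix (Fin n) (Fin n) ℂ := Matrix.of fun i j =>
    if h1 : i.1 = j.1+1 then -1 else if h2 : j.1+1 < i.1 then 0
      else a j.1 j.2 ⟨i.1, by omega⟩ with hx
  have hxEB : InEB x := by
    constructor
    · intro i j hij
      show (if h1 : i.1 = j.1+1 then (-1:ℂ) else if h2 : j.1+1 < i.1 then 0
        else a j.1 j.2 ⟨i.1, by omega⟩) = -1
      rw [dif_pos hij]
    · intro i j hij
      show (if h1 : i.1 = j.1+1 then (-1:ℂ) else if h2 : j.1+1 < i.1 then 0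
        else a j.1 j.2 ⟨i.1, by omega⟩) = 0
      rw [dif_neg (by omega), dif_pos hij]
  have hxq : ∀ (s : ℕ), ∀ (hs : s ≤ n), (cutoff x hs).charpoly = q s := by
    intro s
    induction s using Nat.strong_induction_on with
    | _ s ih =>
      match s with
      | 0 =>
        intro hs
        rw [charpoly_fin_zero, hq]
        simp
      | (t+1) =>
        intro hs
        have htn : t < n := by omega
        have hr := charpoly_rec (cutoff x hs) (InEB_cutoff hxEB hs)
        rw [hr]
        have h1 : (cutoff (cutoff x hs) (Nat.le_succ t)).charpoly = q t := by
          rw [show (cutoff (cutoff x hs) (Nat.le_succ t))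
            = cutoff x (le_trans (Nat.le_succ t) hs) from rfl]
          exact ih t (by omega) _
        rw [h1]
        have h2 : ∀ i : Fin (t+1),
            ((-1:ℂ)^(i.1+t+1) * (cutoff x hs) i (Fin.last t)) •
              (cutoff (cutoff x hs) (le_of_lt i.2 : (i:ℕ) ≤ t+1)).charpoly
            = ((-1:ℂ)^(i.1+t+1) * a t htn i) • q i.1 := by
          intro i
          have hentry : (cutoff x hs) i (Fin.last t) = a t htn i := by
            show (if h1 : (Fin.castLE hs i).1 = (Fin.castLE hs (Fin.last t)).1+1 then (-1:ℂ)
              else if h2 : (Fin.castLE hs (Fin.last t)).1+1 < (Fin.castLE hs i).1 then 0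
              else a (Fin.castLE hs (Fin.last t)).1 (Fin.castLE hs (Fin.last t)).2
                ⟨(Fin.castLE hs i).1, by omega⟩) = a t htn i
            rw [dif_neg (by simp; omega), dif_neg (by simp)]
            rfl
          rw [hentry]
          congr 1
          rw [show (cutoff (cutoff x hs) (le_of_lt i.2 : (i:ℕ) ≤ t+1))
            = cutoff x (le_trans (le_of_lt i.2) hs) from rfl]
          exact ih i.1 (by omega) _
        rw [Finset.sum_congr rfl (fun i _ => h2 i), ha t htn]
        ring
  refine ⟨x, hxEB, ?_⟩
  funext p
  obtain ⟨mf, kf⟩ := p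
  show (-1:ℂ)^(mf.1-kf.1+1) * ((cutoff x mf.2).charpoly.coeff kf.1) = c ⟨mf, kf⟩
  rw [show (cutoff x mf.2).charpoly = q (mf.1+1) from hxq (mf.1+1) mf.2]
  rw [hqcoeff (mf.1+1) kf.1 (by omega)]
  simp only [Nat.add_sub_cancel]
  rw [neg_one_pow_mul_self]
  show (if h : mf.1 < n ∧ kf.1 < mf.1+1 then c ⟨⟨mf.1, h.1⟩, ⟨kf.1, h.2⟩⟩ else 0) = c ⟨mf, kf⟩
  rw [dif_pos ⟨mf.2, kf.2⟩]

/-- The restriction of `Φ_n` to the affine subspace `e + b` is a bijection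
onto `ℂ^{d(n)}`. -/
theorem stmt0 (n : ℕ) (hn : 0 < n) :
    Set.BijOn (Phi n) {x : Matrix (Fin n) (Fin n) ℂ | InEB x} Set.univ := by
  refine ⟨fun x _ => trivial, fun x hx y hy hxy => phi_inj hx hy hxy, fun cvec _ => ?_⟩
  obtain ⟨x, hxEB, hPhi⟩ := phi_surj cvec
  exact ⟨x, hxEB, hPhi⟩
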